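/- arXiv:1111.2783 — 2 statements merged into one kernel-verified Lean document; each statement's English description precedes it below -/
import Mathlib

section
/- Fix integers k ≥ 1 and m ≥ 2, and indices i_1, …, i_{m-1} ∈ {1, …, k}. Let R = R_{i_1} ∪ ⋯ ∪ R_{i_{m-1}} and let 𝓡 be the (k+1)-core with 𝔭(𝓡) = R, where 𝔭 is the Lapointe–Morse map. Then 𝓡 has exactly one addable residue: there is a unique r ∈ ℤ/(k+1)ℤ such that 𝓡 has an addable cell of residue r, and this r is congruent to i_1 + ⋯ + i_{m-1} modulo k+1. Moreover the length of the first row of 𝓡 is i_1 + ⋯ + i_{m-1}. -/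
open scoped RealInnerProductSpace

/-- The hook length of the cell `c` (0-indexed) in the Young diagram `μ`:
arm + leg + 1 = rowLen c.1 + colLen c.2 - c.1 - c.2 - 1. -/
def YoungDiagram.hook (μ : YoungDiagram) (c : ℕ × ℕ) : ℕ :=
  μ.rowLen c.1 + μ.colLen c.2 - c.1 - c.2 - 1

/-- A partition is a `t`-core if no cell has hook length `t`. -/
def YoungDiagram.IsCore (μ : YoungDiagram) (t : ℕ) : Prop :=
  ∀ c ∈ μ.cells, μ.hook c ≠ t

/-- `c` is an addable cell of `μ`: it is not in `μ` and inserting it yields a Young diagram. -/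
def YoungDiagram.IsAddable (μ : YoungDiagram) (c : ℕ × ℕ) : Prop :=
  c ∉ μ ∧ ∃ ν : YoungDiagram, ν.cells = insert c μ.cells

/-- `c` is a removable cell of `μ`: it is in `μ` and erasing it yields a Young diagram. -/
def YoungDiagram.IsRemovable (μ : YoungDiagram) (c : ℕ × ℕ) : Prop :=
  c ∈ μ ∧ ∃ ν : YoungDiagram, ν.cells = μ.cells.erase c

/-- The residue mod `k+1` of a cell: its content `c.2 - c.1` taken in `ZMod (k+1)`. -/
def residue (k : ℕ) (c : ℕ × ℕ) : ZMod (k + 1) :=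
  (((c.2 : ℤ) - (c.1 : ℤ) : ℤ) : ZMod (k + 1))

/-- The rectangular Young diagram with `r` rows and `c` columns. -/
def rectangle (r c : ℕ) : YoungDiagram where
  cells := Finset.range r ×ˢ Finset.range c
  isLowerSet := by
    rintro ⟨a, b⟩ ⟨x, y⟩ ⟨h1, h2⟩ h
    simp only [Finset.coe_product, Set.mem_prod, Finset.mem_coe, Finset.mem_range] at *
    exact ⟨lt_of_le_of_lt h1 h.1, lt_of_le_of_lt h2 h.2⟩

/-- The rectangle `R_i = (i^{k-i+1})`, whose largest hook length is `k`. -/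
def kRectangle (k i : ℕ) : YoungDiagram := rectangle (k - i + 1) i

/-- The multiset of (nonzero) parts of a Young diagram. -/
def partsOf (μ : YoungDiagram) : Multiset ℕ := (μ.rowLens : Multiset ℕ)

/-- The Young diagram whose parts are the given multiset, sorted into non-increasing order. -/
def diagramOfParts (s : Multiset ℕ) : YoungDiagram :=
  YoungDiagram.ofRowLens (s.sort (· ≥ ·)) (List.sortedGE_iff_pairwise.mpr (s.pairwise_sort _))

/-- `R_{i_1} ∪ ⋯ ∪ R_{i_{m-1}}`: the partition obtained by combining the parts of
the rectangles `R_i` for `i` ranging over the multiset `S` (with multiplicity). -/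
def unionRects (k : ℕ) (S : Multiset ℕ) : YoungDiagram :=
  diagramOfParts ((S.map fun i => partsOf (kRectangle k i)).sum)

/-- The Lapointe–Morse map: the `i`-th entry of `pMap k μ` is the number of cells in
row `i` of `μ` whose hook length is at most `k`. -/
def pMap (k : ℕ) (μ : YoungDiagram) (i : ℕ) : ℕ :=
  ((Finset.range (μ.rowLen i)).filter fun j => μ.hook (i, j) ≤ k).card

/-- The simple roots of type `A_k` in the standard realization. -/
noncomputable def simpleRoot (k : ℕ) (i : Fin k) : EuclideanSpace ℝ (Fin (k + 1)) :=
  EuclideanSpace.single i.castSucc 1 - EuclideanSpace.single i.succ 1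

/-- The highest root `φ = α_1 + ⋯ + α_k` of type `A_k`. -/
noncomputable def highestRoot (k : ℕ) : EuclideanSpace ℝ (Fin (k + 1)) :=
  ∑ i, simpleRoot k i

namespace Core5
open Finset
open scoped Classical


open Finset
open scoped Classical

/-- beta numbers -/
def bet (μ : YoungDiagram) (i : ℕ) : ℤ := (μ.rowLen i : ℤ) - i

/-- conjugate co-beta numbers -/
def gam (μ : YoungDiagram) (j : ℕ) : ℤ := (j : ℤ) + 1 - μ.colLen j

lemma bet_strictAnti (μ : YoungDiagram) : StrictAnti (bet μ) := by
  apply strictAnti_nat_of_succ_lt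
  intro i
  have := μ.rowLen_anti i (i + 1) (by omega)
  unfold bet; push_cast; omega

lemma bet_anti (μ : YoungDiagram) : Antitone (bet μ) := (bet_strictAnti μ).antitone

lemma gam_strictMono (μ : YoungDiagram) : StrictMono (gam μ) := by
  apply strictMono_nat_of_lt_succ
  intro j
  have := μ.colLen_anti j (j + 1) (by omega)
  unfold gam; push_cast; omega

lemma gam_lt_of_mem {μ : YoungDiagram} {i j : ℕ} (h : (i, j) ∈ μ) : gam μ j < bet μ i := by
  have h1 : j < μ.rowLen i := YoungDiagram.mem_iff_lt_rowLen.mp h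
  have h2 : i < μ.colLen j := YoungDiagram.mem_iff_lt_colLen.mp h
  unfold bet gam; push_cast; omega

lemma bet_lt_gam_of_not_mem {μ : YoungDiagram} {i j : ℕ} (h : (i, j) ∉ μ) :
    bet μ i < gam μ j := by
  have h1 : μ.rowLen i ≤ j := by
    by_contra hc; exact h (YoungDiagram.mem_iff_lt_rowLen.mpr (by omega))
  have h2 : μ.colLen j ≤ i := by
    by_contra hc; exact h (YoungDiagram.mem_iff_lt_colLen.mpr (by omega))
  unfold bet gam; push_cast; omega

lemma bet_ne_gam (μ : YoungDiagram) (i j : ℕ) : bet μ i ≠ gam μ j := by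
  by_cases h : (i, j) ∈ μ
  · exact (gam_lt_of_mem h).ne'
  · exact (bet_lt_gam_of_not_mem h).ne

/-- every integer is a bead or a co-bead -/
lemma bead_or_gam (μ : YoungDiagram) (n : ℤ) :
    (∃ i, bet μ i = n) ∨ (∃ j, gam μ j = n) := by
  have hex : ∃ i : ℕ, bet μ i ≤ n := by
    refine ⟨((μ.rowLen 0 : ℤ) - n).toNat, ?_⟩
    have h1 : ((μ.rowLen 0 : ℤ) - n) ≤ (((μ.rowLen 0 : ℤ) - n).toNat : ℤ) := Int.self_le_toNat _
    have h2 : μ.rowLen (((μ.rowLen 0 : ℤ) - n).toNat) ≤ μ.rowLen 0 :=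
      μ.rowLen_anti 0 _ (by omega)
    unfold bet; omega
  classical
  let i₀ := Nat.find hex
  have hi₀ : bet μ i₀ ≤ n := Nat.find_spec hex
  rcases eq_or_lt_of_le hi₀ with heq | hlt
  · exact Or.inl ⟨i₀, heq⟩
  · right
    match hi : i₀, hi₀, hlt with
    | 0, hi₀, hlt =>
      -- n > bet μ 0 = rowLen 0
      refine ⟨(n - 1).toNat, ?_⟩
      have hb0 : (μ.rowLen 0 : ℤ) - 0 < n := by
        unfold bet at hlt; push_cast at hlt; omega
      have hj : ((n - 1).toNat : ℤ) = n - 1 := Int.toNat_of_nonneg (by omega)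
      have hge : μ.rowLen 0 ≤ (n - 1).toNat := by omega
      have hnm : ((0 : ℕ), (n-1).toNat) ∉ μ := by
        rw [YoungDiagram.mem_iff_lt_rowLen]; omega
      have hcol : μ.colLen (n - 1).toNat = 0 := by
        by_contra hc
        exact hnm (YoungDiagram.mem_iff_lt_colLen.mpr (by omega))
      unfold gam; rw [hcol]; push_cast; omega
    | (i' + 1 : ℕ), hi₀, hlt =>
      have hmin : ¬ bet μ i' ≤ n := by
        have := Nat.find_min hex (m := i') (by omega)
        exact this
      push_neg at hmin
      -- bet μ i' ≥ n + 1, bet μ (i'+1) < n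
      have h1 : (μ.rowLen i' : ℤ) - i' ≥ n + 1 := by unfold bet at hmin; omega
      have h2 : (μ.rowLen (i' + 1) : ℤ) - (i' + 1) < n := by
        unfold bet at hlt; push_cast at hlt ⊢; omega
      have hjnn : (0 : ℤ) ≤ n + i' := by
        have : (0 : ℤ) ≤ (μ.rowLen (i' + 1) : ℤ) := by positivity
        omega
      refine ⟨(n + i').toNat, ?_⟩
      have hj : ((n + i').toNat : ℤ) = n + i' := Int.toNat_of_nonneg hjnn
      have hmem : (i', (n + i').toNat) ∈ μ := by
        rw [YoungDiagram.mem_iff_lt_rowLen]; omega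
      have hnmem : (i' + 1, (n + i').toNat) ∉ μ := by
        rw [YoungDiagram.mem_iff_lt_rowLen]; omega
      have hc1 : i' < μ.colLen (n + i').toNat := YoungDiagram.mem_iff_lt_colLen.mp hmem
      have hc2 : μ.colLen (n + i').toNat ≤ i' + 1 := by
        by_contra hc
        exact hnmem (YoungDiagram.mem_iff_lt_colLen.mpr (by omega))
      have hcol : μ.colLen (n + i').toNat = i' + 1 := by omega
      unfold gam; rw [hcol]; push_cast; omega

lemma hook_eq {μ : YoungDiagram} {i j : ℕ} (h : (i, j) ∈ μ) :
    (μ.hook (i, j) : ℤ) = bet μ i - gam μ j := by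
  have h1 : j < μ.rowLen i := YoungDiagram.mem_iff_lt_rowLen.mp h
  have h2 : i < μ.colLen j := YoungDiagram.mem_iff_lt_colLen.mp h
  unfold YoungDiagram.hook bet gam; push_cast; omega

/-- pMap counts non-beads in the size-k window below bet μ i. -/
lemma pMap_eq_window (k : ℕ) (μ : YoungDiagram) (i : ℕ) :
    pMap k μ i =
      ((Finset.Icc (bet μ i - k) (bet μ i - 1)).filter
        (fun n => ¬ ∃ t, bet μ t = n)).card := by
  classical
  unfold pMap
  apply Finset.card_bij (fun j _ => gam μ j)
  · intro j hj
    simp only [Finset.mem_filter, Finset.mem_range] at hj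
    obtain ⟨hj1, hj2⟩ := hj
    have hmem : (i, j) ∈ μ := YoungDiagram.mem_iff_lt_rowLen.mpr hj1
    have hk := hook_eq hmem
    have hlt := gam_lt_of_mem hmem
    simp only [Finset.mem_filter, Finset.mem_Icc]
    refine ⟨⟨by omega, by omega⟩, ?_⟩
    rintro ⟨t, ht⟩
    exact bet_ne_gam μ t j ht
  · intro a ha b hb hab
    exact (gam_strictMono μ).injective hab
  · intro n hn
    simp only [Finset.mem_filter, Finset.mem_Icc] at hn
    obtain ⟨⟨hn1, hn2⟩, hn3⟩ := hn
    rcases bead_or_gam μ n with hb | ⟨j, hj⟩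
    · exact absurd hb hn3
    · refine ⟨j, ?_, hj⟩
      have hmem : (i, j) ∈ μ := by
        by_contra hc
        have := bet_lt_gam_of_not_mem hc
        omega
      have hk := hook_eq hmem
      simp only [Finset.mem_filter, Finset.mem_range]
      exact ⟨YoungDiagram.mem_iff_lt_rowLen.mp hmem, by omega⟩

/-- core closure in terms of beads -/
lemma core_closure {k : ℕ} {μ : YoungDiagram} (hcore : μ.IsCore (k + 1)) (i : ℕ) :
    ∃ t, bet μ t = bet μ i - (k + 1) := by
  by_cases h0 : μ.rowLen i = 0
  · refine ⟨i + (k + 1), ?_⟩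
    have : μ.rowLen (i + (k + 1)) = 0 := by
      have := μ.rowLen_anti i (i + (k+1)) (by omega); omega
    unfold bet; rw [this, h0]; push_cast; omega
  · by_contra hc
    push_neg at hc
    have : ∃ j, gam μ j = bet μ i - (k + 1) := by
      rcases bead_or_gam μ (bet μ i - (k + 1)) with ⟨t, ht⟩ | h
      · exact absurd ht (hc t)
      · exact h
    obtain ⟨j, hj⟩ := this
    have hmem : (i, j) ∈ μ := by
      by_contra hcm
      have h1 := bet_lt_gam_of_not_mem hcm
      omega
    have hk := hook_eq hmem
    have : (μ.hook (i, j) : ℤ) = (k + 1 : ℕ) := by push_cast; omega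
    exact hcore (i, j) ((YoungDiagram.mem_cells _).mpr hmem) (by exact_mod_cast this)

/-- addable cells are exactly outer corners -/
lemma isAddable_iff {μ : YoungDiagram} {c : ℕ × ℕ} :
    μ.IsAddable c ↔ c.2 = μ.rowLen c.1 ∧ (c.1 = 0 ∨ μ.rowLen c.1 < μ.rowLen (c.1 - 1)) := by
  obtain ⟨i, j⟩ := c
  show μ.IsAddable (i, j) ↔ j = μ.rowLen i ∧ (i = 0 ∨ μ.rowLen i < μ.rowLen (i - 1))
  constructor
  · rintro ⟨hnot, ν, hν⟩
    have hmemν : ∀ x, x ∈ ν ↔ x = (i, j) ∨ x ∈ μ := by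
      intro x
      rw [← YoungDiagram.mem_cells, hν, Finset.mem_insert]
      simp [YoungDiagram.mem_cells]
    have hij : (i, j) ∈ ν := (hmemν _).mpr (Or.inl rfl)
    have hrow : ∀ j' < j, (i, j') ∈ μ := by
      intro j' hj'
      have : (i, j') ∈ ν := ν.isLowerSet (by simp [Prod.le_def]; omega) hij
      rcases (hmemν _).mp this with h | h
      · simp only [Prod.mk.injEq] at h; omega
      · exact h
    have hle : μ.rowLen i ≤ j := by
      by_contra hcon
      exact hnot (YoungDiagram.mem_iff_lt_rowLen.mpr (by omega))
    have hj : j = μ.rowLen i := by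
      by_contra hne
      have hlt : μ.rowLen i < j := by omega
      have := YoungDiagram.mem_iff_lt_rowLen.mp (hrow (μ.rowLen i) hlt)
      omega
    refine ⟨hj, ?_⟩
    rcases Nat.eq_zero_or_pos i with h0 | hpos
    · exact Or.inl h0
    · right
      have : (i - 1, j) ∈ ν := ν.isLowerSet (by simp [Prod.le_def]) hij
      rcases (hmemν _).mp this with h | h
      · exfalso; simp only [Prod.mk.injEq] at h; omega
      · have := YoungDiagram.mem_iff_lt_rowLen.mp h
        omega
  · rintro ⟨hj, hcorner⟩
    subst hj
    constructor
    · rw [YoungDiagram.mem_iff_lt_rowLen]; omega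
    · refine ⟨⟨insert (i, μ.rowLen i) μ.cells, ?_⟩, rfl⟩
      rintro ⟨y1, y2⟩ ⟨x1, x2⟩ hle hy
      simp only [Finset.coe_insert, Set.mem_insert_iff, Finset.mem_coe,
        YoungDiagram.mem_cells, Prod.mk.injEq] at hy ⊢
      obtain ⟨h1, h2⟩ := hle
      simp only at h1 h2
      rcases hy with ⟨hy1, hy2⟩ | hy
      · by_cases hx : x1 = i ∧ x2 = μ.rowLen i
        · exact Or.inl hx
        · right
          rw [YoungDiagram.mem_iff_lt_rowLen]
          rcases Nat.lt_or_ge x1 i with hlt | hge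
          · rcases hcorner with h0 | hcor
            · omega
            · have : μ.rowLen (i - 1) ≤ μ.rowLen x1 := μ.rowLen_anti x1 (i-1) (by omega)
              omega
          · have hx1' : x1 = i := by omega
            have hrw : μ.rowLen x1 = μ.rowLen i := by rw [hx1']
            have hne : x2 ≠ μ.rowLen i := fun hc => hx ⟨hx1', hc⟩
            omega
      · exact Or.inr (μ.isLowerSet (by exact ⟨h1, h2⟩) hy)

/-- corner condition in terms of beads -/
lemma corner_iff_bet {μ : YoungDiagram} {i : ℕ} :
    (i = 0 ∨ μ.rowLen i < μ.rowLen (i - 1)) ↔ (∀ t, bet μ t ≠ bet μ i + 1) := by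
  constructor
  · rintro h t ht
    have htlt : t < i := by
      by_contra hc
      push_neg at hc
      have := bet_anti μ hc
      omega
    rcases h with h0 | hcor
    · omega
    · have h1 : bet μ (i - 1) ≥ bet μ i + 2 := by
        unfold bet at *
        have h2 : (i : ℤ) - 1 = ((i - 1 : ℕ) : ℤ) := by omega
        push_cast
        omega
      have h2 : bet μ t ≥ bet μ (i - 1) := bet_anti μ (by omega)
      omega
  · intro h
    rcases Nat.eq_zero_or_pos i with h0 | hpos
    · exact Or.inl h0
    · right
      by_contra hc
      push_neg at hc
      have heq : μ.rowLen (i - 1) = μ.rowLen i := by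
        have := μ.rowLen_anti (i-1) i (by omega); omega
      have : bet μ (i - 1) = bet μ i + 1 := by
        unfold bet; rw [heq]; push_cast; omega
      exact h (i - 1) this

lemma rowLen_eq_zero_of_colLen {μ : YoungDiagram} {i : ℕ} (h : μ.colLen 0 ≤ i) :
    μ.rowLen i = 0 := by
  by_contra hc
  have : (i, 0) ∈ μ := YoungDiagram.mem_iff_lt_rowLen.mpr (by omega)
  have := YoungDiagram.mem_iff_lt_colLen.mp this
  omega



/-- the target core's row lengths, built from the sorted list of rectangle sizes -/
def tgt (k : ℕ) : List ℕ → ℕ → ℕ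
  | [], _ => 0
  | l :: L, i => if i < k + 1 - l then l + L.sum else tgt k L (i - (k + 1 - l))

/-- the sorted union-of-rectangles row lengths -/
def sp (k : ℕ) : List ℕ → ℕ → ℕ
  | [], _ => 0
  | l :: L, i => if i < k + 1 - l then l else sp k L (i - (k + 1 - l))

def tbet (k : ℕ) (L : List ℕ) (i : ℕ) : ℤ := (tgt k L i : ℤ) - i

def blen (k : ℕ) : List ℕ → ℕ
  | [] => 0
  | l :: L => (k + 1 - l) + blen k L

lemma tgt_nil (k i : ℕ) : tgt k [] i = 0 := rfl
lemma tgt_cons (k : ℕ) (l : ℕ) (L : List ℕ) (i : ℕ) :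
    tgt k (l :: L) i = if i < k + 1 - l then l + L.sum else tgt k L (i - (k + 1 - l)) := rfl
lemma sp_cons (k : ℕ) (l : ℕ) (L : List ℕ) (i : ℕ) :
    sp k (l :: L) i = if i < k + 1 - l then l else sp k L (i - (k + 1 - l)) := rfl

lemma tgt_le_sum (k : ℕ) (L : List ℕ) (i : ℕ) : tgt k L i ≤ L.sum := by
  induction L generalizing i with
  | nil => simp [tgt]
  | cons l L ih =>
    rw [tgt_cons]
    split
    · simp [List.sum_cons]
    · exact le_trans (ih _) (by simp [List.sum_cons])

lemma tgt_zero (k : ℕ) (l : ℕ) (L : List ℕ) (hl : l ≤ k) :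
    tgt k (l :: L) 0 = l + L.sum := by
  rw [tgt_cons]; rw [if_pos (by omega)]

lemma tgt_zero_sum (k : ℕ) (L : List ℕ) (hb : ∀ l ∈ L, l ≤ k) :
    tgt k L 0 = L.sum := by
  cases L with
  | nil => rfl
  | cons l L' => rw [tgt_zero k l L' (hb l (by simp)), List.sum_cons]

lemma tgt_antitone (k : ℕ) (L : List ℕ) : ∀ i, tgt k L (i + 1) ≤ tgt k L i := by
  induction L with
  | nil => intro i; simp [tgt]
  | cons l L ih =>
    intro i
    rw [tgt_cons, tgt_cons]
    rcases Nat.lt_or_ge (i + 1) (k + 1 - l) with h1 | h1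
    · rw [if_pos h1, if_pos (by omega)]
    · rw [if_neg (by omega)]
      rcases Nat.lt_or_ge i (k + 1 - l) with h2 | h2
      · rw [if_pos h2]
        exact le_trans (tgt_le_sum k L _) (by simp)
      · rw [if_neg (by omega)]
        have : i + 1 - (k + 1 - l) = (i - (k + 1 - l)) + 1 := by omega
        rw [this]
        exact ih _

lemma tgt_anti (k : ℕ) (L : List ℕ) : Antitone (tgt k L) :=
  antitone_nat_of_succ_le (tgt_antitone k L)

lemma tbet_strictAnti (k : ℕ) (L : List ℕ) : StrictAnti (tbet k L) := by
  apply strictAnti_nat_of_succ_lt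
  intro i
  have := tgt_antitone k L i
  unfold tbet; push_cast; omega

lemma tbet_le_sum (k : ℕ) (L : List ℕ) (i : ℕ) : tbet k L i ≤ (L.sum : ℤ) := by
  have := tgt_le_sum k L i
  unfold tbet; omega

lemma tgt_eq_zero (k : ℕ) (L : List ℕ) (i : ℕ) (h : blen k L ≤ i) : tgt k L i = 0 := by
  induction L generalizing i with
  | nil => rfl
  | cons l L ih =>
    rw [tgt_cons]
    unfold blen at h
    rw [if_neg (by omega)]
    exact ih _ (by omega)

/-- shift: beyond the first block means recursing -/
lemma tbet_shift (k l : ℕ) (L : List ℕ) (i : ℕ) (h : k + 1 - l ≤ i) :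
    tbet k (l :: L) i = tbet k L (i - (k + 1 - l)) - (k + 1 - l : ℕ) := by
  unfold tbet
  rw [tgt_cons, if_neg (by omega)]
  have : ((i - (k + 1 - l) : ℕ) : ℤ) = (i : ℤ) - ((k + 1 - l : ℕ) : ℤ) := by omega
  omega

/-- G6: a small co-depth from the top of the bead set is always a bead -/
lemma bead_of_small (k : ℕ) (L : List ℕ) (d : ℕ) (hb : ∀ l ∈ L, l ≤ k)
    (hd : ∀ l ∈ L, d ≤ k - l) :
    ∃ t, tbet k L t = (L.sum : ℤ) - d := by
  refine ⟨d, ?_⟩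
  cases L with
  | nil => simp [tbet, tgt]
  | cons l L =>
    have hl := hd l (by simp)
    have hlk := hb l (by simp)
    unfold tbet
    rw [tgt_cons, if_pos (by omega), List.sum_cons]

/-- block-structure characterization of beads for a cons list -/
lemma tbet_cons_bead (k l : ℕ) (L : List ℕ) (hl1 : 1 ≤ l) (hl2 : l ≤ k) (n : ℤ) :
    (∃ t, tbet k (l :: L) t = n) ↔
      (((l : ℤ) + L.sum - (k - l) ≤ n ∧ n ≤ (l : ℤ) + L.sum) ∨
        ∃ t', tbet k L t' = n + ((k + 1 - l : ℕ) : ℤ)) := by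
  constructor
  · rintro ⟨t, rfl⟩
    rcases Nat.lt_or_ge t (k + 1 - l) with h1 | h1
    · left
      unfold tbet
      rw [tgt_cons, if_pos h1]
      refine ⟨?_, ?_⟩ <;> omega
    · right
      exact ⟨t - (k + 1 - l), by rw [tbet_shift k l L t h1]; ring⟩
  · rintro (⟨h1, h2⟩ | ⟨t', ht'⟩)
    · refine ⟨((l : ℤ) + L.sum - n).toNat, ?_⟩
      have htn : (((l : ℤ) + L.sum - n).toNat : ℤ) = (l : ℤ) + L.sum - n := by
        rw [Int.toNat_of_nonneg]; omega
      unfold tbet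
      rw [tgt_cons, if_pos (by omega)]
      omega
    · refine ⟨t' + (k + 1 - l), ?_⟩
      rw [tbet_shift k l L _ (by omega)]
      have : t' + (k + 1 - l) - (k + 1 - l) = t' := by omega
      rw [this, ht']
      ring

/-- G2: closure of the target bead set -/
lemma tbet_closure (k : ℕ) (L : List ℕ) (hb : ∀ l ∈ L, 1 ≤ l ∧ l ≤ k)
    (hs : List.Pairwise (· ≥ ·) L) (i : ℕ) :
    ∃ t, tbet k L t = tbet k L i - (k + 1) := by
  induction L generalizing i with
  | nil =>
    refine ⟨i + (k + 1), ?_⟩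
    simp only [tbet, tgt]
    omega
  | cons l L ih =>
    obtain ⟨hl1, hl2⟩ := hb l (by simp)
    rw [List.pairwise_cons] at hs
    rcases Nat.lt_or_ge i (k + 1 - l) with h1 | h1
    · -- first block: need bead at L.sum - i in L
      have hL : ∀ l' ∈ L, i ≤ k - l' := by
        intro l' hl'
        have := hs.1 l' hl'
        omega
      obtain ⟨t', ht'⟩ := bead_of_small k L i (fun l' h => (hb l' (by simp [h])).2) hL
      refine ⟨t' + (k + 1 - l), ?_⟩
      rw [tbet_shift k l L _ (by omega)]
      have heq : t' + (k + 1 - l) - (k + 1 - l) = t' := by omega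
      rw [heq, ht']
      unfold tbet
      rw [tgt_cons, if_pos h1]
      omega
    · obtain ⟨t', ht'⟩ := ih (fun l' h => hb l' (by simp [h])) hs.2 (i - (k + 1 - l))
      refine ⟨t' + (k + 1 - l), ?_⟩
      rw [tbet_shift k l L _ (by omega), tbet_shift k l L _ h1]
      have heq : t' + (k + 1 - l) - (k + 1 - l) = t' := by omega
      rw [heq, ht']
      ring

/-- G5: positions with no bead just above have content ≡ sum mod (k+1) -/
lemma tbet_residue (k : ℕ) (L : List ℕ) (hb : ∀ l ∈ L, 1 ≤ l ∧ l ≤ k)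
    (hs : List.Pairwise (· ≥ ·) L) (i : ℕ) :
    ((tbet k L i : ℤ) : ZMod (k + 1)) = ((L.sum : ℕ) : ZMod (k + 1)) ∨
      ∃ t, tbet k L t = tbet k L i + 1 := by
  induction L generalizing i with
  | nil =>
    cases i with
    | zero => left; simp [tbet, tgt]
    | succ i' => right; refine ⟨i', ?_⟩; simp only [tbet, tgt]; omega
  | cons l L ih =>
    obtain ⟨hl1, hl2⟩ := hb l (by simp)
    rw [List.pairwise_cons] at hs
    rcases Nat.lt_or_ge i (k + 1 - l) with h1 | h1
    · cases i with
      | zero =>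
        left
        unfold tbet
        rw [tgt_cons, if_pos h1]
        rw [show ((0:ℕ):ℤ) = 0 from rfl, sub_zero, Int.cast_natCast, List.sum_cons]
      | succ i' =>
        right
        refine ⟨i', ?_⟩
        simp only [tbet, tgt_cons]
        rw [if_pos h1, if_pos (show i' < k + 1 - l by omega)]
        omega
    · rcases ih (fun l' h => hb l' (by simp [h])) hs.2 (i - (k + 1 - l)) with hres | ⟨t', ht'⟩
      · left
        rw [tbet_shift k l L _ h1]
        rw [Int.cast_sub, hres, Int.cast_natCast]
        have he : ((k + 1 - l : ℕ) : ZMod (k + 1)) + (l : ZMod (k + 1)) = 0 := by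
          have h2 : ((k + 1 - l : ℕ) : ZMod (k+1)) + ((l : ℕ) : ZMod (k+1))
              = ((k + 1 - l + l : ℕ) : ZMod (k+1)) := by push_cast; ring
          rw [h2]
          have h3 : k + 1 - l + l = k + 1 := by omega
          rw [h3, ZMod.natCast_self]
        rw [List.sum_cons, Nat.cast_add]
        linear_combination -he
      · right
        refine ⟨t' + (k + 1 - l), ?_⟩
        rw [tbet_shift k l L _ (by omega), tbet_shift k l L _ h1]
        have heq : t' + (k + 1 - l) - (k + 1 - l) = t' := by omega
        rw [heq, ht']
        ring

/-- G3: the window count for the target equals the sorted union-of-rectangles parts -/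
lemma tbet_window (k : ℕ) (L : List ℕ) (hb : ∀ l ∈ L, 1 ≤ l ∧ l ≤ k)
    (hs : List.Pairwise (· ≥ ·) L) (i : ℕ) :
    ((Finset.Icc (tbet k L i - k) (tbet k L i - 1)).filter
      (fun n => ¬ ∃ t, tbet k L t = n)).card = sp k L i := by
  induction L generalizing i with
  | nil =>
    show _ = 0
    rw [Finset.card_eq_zero, Finset.filter_eq_empty_iff]
    intro n hn
    rw [Finset.mem_Icc] at hn
    simp only [not_not]
    have h0 : tbet k [] i = -(i : ℤ) := by simp [tbet, tgt]
    refine ⟨(-n).toNat, ?_⟩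
    have hneg : n ≤ -1 := by omega
    have : ((-n).toNat : ℤ) = -n := Int.toNat_of_nonneg (by omega)
    simp only [tbet, tgt]
    omega
  | cons l L ih =>
    obtain ⟨hl1, hl2⟩ := hb l (by simp)
    rw [List.pairwise_cons] at hs
    have hb' : ∀ l' ∈ L, 1 ≤ l' ∧ l' ≤ k := fun l' h => hb l' (by simp [h])
    have hki : ((k + 1 - l : ℕ) : ℤ) = (k : ℤ) + 1 - l := by omega
    rcases Nat.lt_or_ge i (k + 1 - l) with h1 | h1
    · -- first block
      have hA : tbet k (l :: L) i = ((l : ℤ) + L.sum) - i := by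
        unfold tbet; rw [tgt_cons, if_pos h1]; push_cast [List.sum_cons]; ring
      rw [sp_cons, if_pos h1]
      have hset : ((Finset.Icc (tbet k (l :: L) i - k) (tbet k (l :: L) i - 1)).filter
          (fun n => ¬ ∃ t, tbet k (l :: L) t = n))
          = Finset.Icc ((l : ℤ) + L.sum - k) ((l : ℤ) + L.sum - k + l - 1) := by
        ext n
        simp only [Finset.mem_filter, Finset.mem_Icc]
        rw [hA, tbet_cons_bead k l L hl1 hl2]
        constructor
        · rintro ⟨⟨hn1, hn2⟩, hnb⟩
          push_neg at hnb
          obtain ⟨hnb1, hnb2⟩ := hnb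
          constructor
          · -- lower bound
            by_contra hlow
            push_neg at hlow
            have hm : n + ((k + 1 - l : ℕ) : ℤ) ≤ (L.sum : ℤ) := by omega
            have hm2 : (L.sum : ℤ) - (n + ((k + 1 - l : ℕ) : ℤ)) ≤ (i : ℤ) - 1 := by omega
            set d : ℕ := ((L.sum : ℤ) - (n + ((k + 1 - l : ℕ) : ℤ))).toNat with hd
            have hdc : (d : ℤ) = (L.sum : ℤ) - (n + ((k + 1 - l : ℕ) : ℤ)) :=
              Int.toNat_of_nonneg (by omega)
            have hdL : ∀ l' ∈ L, d ≤ k - l' := by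
              intro l' hl'
              have hll := hs.1 l' hl'
              have := (hb' l' hl').2
              omega
            obtain ⟨t', ht'⟩ := bead_of_small k L d (fun l' h => (hb' l' h).2) hdL
            exact hnb2 t' (by omega)
          · -- upper bound
            have := hnb1
            omega
        · rintro ⟨hn1, hn2⟩
          refine ⟨⟨by omega, by omega⟩, ?_⟩
          rintro (⟨hx1, hx2⟩ | ⟨t', ht'⟩)
          · omega
          · have := tbet_le_sum k L t'
            omega
      rw [hset, Int.card_Icc]
      omega
    · -- beyond the first block
      have hsh := tbet_shift k l L i h1
      rw [sp_cons, if_neg (by omega)]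
      have himg : ((Finset.Icc (tbet k (l :: L) i - k) (tbet k (l :: L) i - 1)).filter
          (fun n => ¬ ∃ t, tbet k (l :: L) t = n))
          = Finset.image (fun n => n - ((k + 1 - l : ℕ) : ℤ))
            ((Finset.Icc (tbet k L (i - (k + 1 - l)) - k) (tbet k L (i - (k + 1 - l)) - 1)).filter
              (fun n => ¬ ∃ t, tbet k L t = n)) := by
        ext n
        simp only [Finset.mem_filter, Finset.mem_Icc, Finset.mem_image]
        constructor
        · rintro ⟨⟨hn1, hn2⟩, hnb⟩
          rw [tbet_cons_bead k l L hl1 hl2] at hnb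
          push_neg at hnb
          refine ⟨n + ((k + 1 - l : ℕ) : ℤ), ⟨⟨by omega, by omega⟩, ?_⟩, by ring⟩
          rintro ⟨t', ht'⟩
          exact hnb.2 t' ht'
        · rintro ⟨m, ⟨⟨hm1, hm2⟩, hmb⟩, rfl⟩
          have hle0 : tbet k L (i - (k + 1 - l)) ≤ (L.sum : ℤ) := tbet_le_sum k L _
          refine ⟨⟨by omega, by omega⟩, ?_⟩
          rw [tbet_cons_bead k l L hl1 hl2]
          rintro (⟨hx1, hx2⟩ | ⟨t', ht'⟩)
          · omega
          · exact hmb ⟨t', by omega⟩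
      rw [himg, Finset.card_image_of_injective _ (fun a b h => by omega)]
      exact ih hb' hs.2 _



/-- the concatenated block list -/
def bl (k : ℕ) : List ℕ → List ℕ
  | [] => []
  | l :: L => List.replicate (k + 1 - l) l ++ bl k L

lemma mem_rectangle {r c a b : ℕ} : (a, b) ∈ rectangle r c ↔ a < r ∧ b < c := by
  show (a, b) ∈ (rectangle r c).cells ↔ _
  simp [rectangle]

lemma rectangle_rowLen {r c i : ℕ} (h : i < r) : (rectangle r c).rowLen i = c := by
  rcases Nat.eq_zero_or_pos c with rfl | hc
  · have : ¬ (0 : ℕ) < (rectangle r 0).rowLen i := by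
      rw [← YoungDiagram.mem_iff_lt_rowLen, mem_rectangle]
      omega
    omega
  · apply Nat.le_antisymm
    · by_contra hcon
      push_neg at hcon
      have := YoungDiagram.mem_iff_lt_rowLen.mpr (show c < (rectangle r c).rowLen i by omega)
      rw [mem_rectangle] at this
      omega
    · have := YoungDiagram.mem_iff_lt_rowLen.mp (mem_rectangle.mpr ⟨h, show c - 1 < c by omega⟩)
      omega

lemma rectangle_colLen_zero {r c : ℕ} (hc : 0 < c) : (rectangle r c).colLen 0 = r := by
  apply Nat.le_antisymm
  · by_contra hcon
    push_neg at hcon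
    have := YoungDiagram.mem_iff_lt_colLen.mpr (show r < (rectangle r c).colLen 0 by omega)
    rw [mem_rectangle] at this
    omega
  · rcases Nat.eq_zero_or_pos r with rfl | hr
    · omega
    · have := YoungDiagram.mem_iff_lt_colLen.mp (mem_rectangle.mpr ⟨show r - 1 < r by omega, hc⟩)
      omega

lemma rectangle_rowLens {r c : ℕ} (hc : 0 < c) :
    (rectangle r c).rowLens = List.replicate r c := by
  unfold YoungDiagram.rowLens
  rw [rectangle_colLen_zero hc]
  have hlen : ((List.range r).map (rectangle r c).rowLen).length = r := by simp
  rw [show List.replicate r c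
      = List.replicate ((List.range r).map (rectangle r c).rowLen).length c from by rw [hlen]]
  apply List.eq_replicate_of_mem
  intro b hbmem
  simp only [List.mem_map, List.mem_range] at hbmem
  obtain ⟨i, hi, rfl⟩ := hbmem
  exact rectangle_rowLen hi

lemma partsOf_kRectangle {k l : ℕ} (h1 : 1 ≤ l) (h2 : l ≤ k) :
    partsOf (kRectangle k l) = Multiset.replicate (k + 1 - l) l := by
  unfold partsOf kRectangle
  rw [rectangle_rowLens h1]
  have : k - l + 1 = k + 1 - l := by omega
  rw [this]
  rfl

lemma bl_coe (k : ℕ) (L : List ℕ) (hb : ∀ l ∈ L, 1 ≤ l ∧ l ≤ k) :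
    ((bl k L : List ℕ) : Multiset ℕ) = (Multiset.map (fun l => partsOf (kRectangle k l)) (L : Multiset ℕ)).sum := by
  induction L with
  | nil => rfl
  | cons l L ih =>
    have hl := hb l (by simp)
    show ((List.replicate (k + 1 - l) l ++ bl k L : List ℕ) : Multiset ℕ) = _
    rw [← Multiset.coe_add]
    have : ((l :: L : List ℕ) : Multiset ℕ) = l ::ₘ (L : Multiset ℕ) := rfl
    rw [this, Multiset.map_cons, Multiset.sum_cons, ih (fun x hx => hb x (by simp [hx])),
      partsOf_kRectangle hl.1 hl.2, Multiset.coe_replicate]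

lemma mem_bl {k : ℕ} {L : List ℕ} {x : ℕ} (h : x ∈ bl k L) : x ∈ L := by
  induction L with
  | nil => cases h
  | cons l L ih =>
    rcases List.mem_append.mp h with h' | h'
    · simp [List.eq_of_mem_replicate h']
    · simp [ih h']

lemma bl_sorted (k : ℕ) (L : List ℕ) (hs : List.Pairwise (· ≥ ·) L) :
    List.Pairwise (· ≥ ·) (bl k L) := by
  induction L with
  | nil => exact List.Pairwise.nil
  | cons l L ih =>
    rw [List.pairwise_cons] at hs
    show List.Pairwise (· ≥ ·) (List.replicate (k + 1 - l) l ++ bl k L)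
    rw [List.pairwise_append]
    refine ⟨List.pairwise_replicate.mpr (Or.inr (le_refl l)), ih hs.2, ?_⟩
    intro a ha b hb
    rw [List.eq_of_mem_replicate ha]
    exact hs.1 b (mem_bl hb)

lemma getD_bl (k : ℕ) (L : List ℕ) (i : ℕ) : (bl k L).getD i 0 = sp k L i := by
  induction L generalizing i with
  | nil => cases i <;> rfl
  | cons l L ih =>
    show (List.replicate (k + 1 - l) l ++ bl k L).getD i 0 = _
    rcases Nat.lt_or_ge i (k + 1 - l) with h | h
    · rw [List.getD_append _ _ _ _ (by simpa using h)]
      show _ = sp k (l :: L) i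
      unfold sp
      rw [if_pos h]
      rw [List.getD_eq_getElem _ _ (by simpa using h)]
      simp
    · rw [List.getD_append_right _ _ _ _ (by simpa using h)]
      show _ = sp k (l :: L) i
      unfold sp
      rw [if_neg (by omega)]
      rw [List.length_replicate]
      exact ih _

lemma rowLen_ofRowLens_getD (w : List ℕ) (hw : w.SortedGE) (i : ℕ) :
    (YoungDiagram.ofRowLens w hw).rowLen i = w.getD i 0 := by
  rcases Nat.lt_or_ge i w.length with h | h
  · rw [List.getD_eq_getElem _ _ h]
    exact YoungDiagram.rowLen_ofRowLens ⟨i, h⟩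
  · rw [List.getD_eq_default _ _ h]
    by_contra hc
    have : (i, 0) ∈ YoungDiagram.ofRowLens w hw :=
      YoungDiagram.mem_iff_lt_rowLen.mpr (by omega)
    rw [YoungDiagram.mem_ofRowLens] at this
    obtain ⟨h', _⟩ := this
    omega

/-- U: the row lengths of the union of rectangles are given by `sp` -/
lemma unionRects_rowLen (k : ℕ) (S : Multiset ℕ) (hS : ∀ l ∈ S, 1 ≤ l ∧ l ≤ k) (i : ℕ) :
    (unionRects k S).rowLen i = sp k (S.sort (· ≥ ·)) i := by
  set L := S.sort (· ≥ ·) with hL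
  have hLmem : ∀ l ∈ L, 1 ≤ l ∧ l ≤ k := fun l hl => hS l (Multiset.mem_sort _ |>.mp hl)
  have hLsort : List.Pairwise (· ≥ ·) L := S.pairwise_sort _
  have hMeq : ((S.map fun l => partsOf (kRectangle k l)).sum : Multiset ℕ) = (bl k L : Multiset ℕ) := by
    rw [bl_coe k L hLmem, hL, Multiset.sort_eq]
  unfold unionRects diagramOfParts
  rw [rowLen_ofRowLens_getD]
  rw [← getD_bl]
  congr 1
  refine List.Perm.eq_of_pairwise' (Multiset.pairwise_sort _ _) (bl_sorted k L hLsort) ?_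
  rw [← Multiset.coe_eq_coe, Multiset.sort_eq, hMeq]



lemma key_lt (k : ℕ) (Bd : ℤ → Prop) (M : ℤ) (hBd : ∀ n, Bd n → n ≤ M)
    (b b' : ℤ) (hb : M < b)
    (hcb' : Bd (b' - (k + 1))) (hlt : b < b') :
    ((Finset.Icc (b - k) (b - 1)).filter (fun n => ¬ Bd n)).card
      < ((Finset.Icc (b' - k) (b' - 1)).filter (fun n => ¬ Bd n)).card := by
  have hup : b' - (k + 1) ≤ M := hBd _ hcb'
  -- so b' ≤ b + k
  have hd : b' ≤ b + k := by omega
  have e1 : Finset.Icc (b - k) (b - 1)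
      = Finset.Icc (b - k) (b' - (k + 1)) ∪ Finset.Icc (b' - k) (b - 1) := by
    ext n; simp only [Finset.mem_Icc, Finset.mem_union]; omega
  have e2 : Finset.Icc (b' - k) (b' - 1)
      = Finset.Icc (b' - k) (b - 1) ∪ Finset.Icc b (b' - 1) := by
    ext n; simp only [Finset.mem_Icc, Finset.mem_union]; omega
  have d1 : Disjoint (Finset.Icc (b - k) (b' - (k + 1))) (Finset.Icc (b' - k) (b - 1)) := by
    rw [Finset.disjoint_left]
    intro n h1 h2
    rw [Finset.mem_Icc] at h1 h2
    omega
  have d2 : Disjoint (Finset.Icc (b' - k) (b - 1)) (Finset.Icc b (b' - 1)) := by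
    rw [Finset.disjoint_left]
    intro n h1 h2
    rw [Finset.mem_Icc] at h1 h2
    omega
  rw [e1, e2, Finset.filter_union, Finset.filter_union,
    Finset.card_union_of_disjoint (Finset.disjoint_filter_filter d1),
    Finset.card_union_of_disjoint (Finset.disjoint_filter_filter d2)]
  have hA2 : ((Finset.Icc b (b' - 1)).filter (fun n => ¬ Bd n)).card = (b' - b).toNat := by
    rw [Finset.filter_true_of_mem, Int.card_Icc]
    · omega
    · intro n hn
      rw [Finset.mem_Icc] at hn
      intro hBdn
      have := hBd n hBdn
      omega
  have hA1 : ((Finset.Icc (b - k) (b' - (k + 1))).filter (fun n => ¬ Bd n)).card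
      < (b' - b).toNat := by
    have hsub : ((Finset.Icc (b - k) (b' - (k + 1))).filter (fun n => ¬ Bd n))
        ⊆ (Finset.Icc (b - k) (b' - (k + 1))).erase (b' - (k + 1)) := by
      intro n hn
      rw [Finset.mem_filter] at hn
      rw [Finset.mem_erase]
      refine ⟨?_, hn.1⟩
      rintro rfl
      exact hn.2 hcb'
    have hmem : (b' - (k + 1)) ∈ Finset.Icc (b - k) (b' - (k + 1)) := by
      rw [Finset.mem_Icc]; omega
    calc ((Finset.Icc (b - k) (b' - (k + 1))).filter (fun n => ¬ Bd n)).card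
        ≤ ((Finset.Icc (b - k) (b' - (k + 1))).erase (b' - (k + 1))).card :=
          Finset.card_le_card hsub
      _ = (Finset.Icc (b - k) (b' - (k + 1))).card - 1 := Finset.card_erase_of_mem hmem
      _ < (b' - b).toNat := by rw [Int.card_Icc]; omega
  omega

lemma key_inj (k : ℕ) (Bd : ℤ → Prop) (M : ℤ) (hBd : ∀ n, Bd n → n ≤ M)
    (b b' : ℤ) (hb : M < b) (hb' : M < b')
    (hcb : Bd (b - (k + 1))) (hcb' : Bd (b' - (k + 1)))
    (hf : ((Finset.Icc (b - k) (b - 1)).filter (fun n => ¬ Bd n)).card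
        = ((Finset.Icc (b' - k) (b' - 1)).filter (fun n => ¬ Bd n)).card) : b = b' := by
  rcases lt_trichotomy b b' with h | h | h
  · have := key_lt k Bd M hBd b b' hb hcb' h
    omega
  · exact h
  · have := key_lt k Bd M hBd b' b hb' hcb h
    omega


lemma row_step (k : ℕ) (L : List ℕ) (hb : ∀ l ∈ L, 1 ≤ l ∧ l ≤ k)
    (hs : List.Pairwise (· ≥ ·) L) (μ : YoungDiagram) (i : ℕ)
    (hlater : ∀ t, i < t → μ.rowLen t = tgt k L t)
    (hclo : ∃ t, bet μ t = bet μ i - (k + 1))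
    (hwin : ((Finset.Icc (bet μ i - k) (bet μ i - 1)).filter
        (fun n => ¬ ∃ t, bet μ t = n)).card = sp k L i) :
    μ.rowLen i = tgt k L i := by
  set Bd : ℤ → Prop := fun n => ∃ t, i < t ∧ bet μ t = n with hBdDef
  have hlatbet : ∀ t, i < t → bet μ t = tbet k L t := by
    intro t ht; unfold bet tbet; rw [hlater t ht]
  have hM : ∀ n, Bd n → n ≤ bet μ (i + 1) := by
    rintro n ⟨t, ht, rfl⟩; exact bet_anti μ (by omega)
  have hb1 : bet μ (i + 1) < bet μ i := bet_strictAnti μ (by omega)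
  have hb2 : bet μ (i + 1) < tbet k L i := by
    rw [hlatbet (i + 1) (by omega)]
    exact tbet_strictAnti k L (by omega)
  have hcb : Bd (bet μ i - (k + 1)) := by
    obtain ⟨t, ht⟩ := hclo
    have hit : i < t := by
      by_contra hc; push_neg at hc
      have := bet_anti μ hc
      omega
    exact ⟨t, hit, ht⟩
  have hcb' : Bd (tbet k L i - (k + 1)) := by
    obtain ⟨t, ht⟩ := tbet_closure k L hb hs i
    have hit : i < t := by
      by_contra hc; push_neg at hc
      have := (tbet_strictAnti k L).antitone hc
      omega
    exact ⟨t, hit, by rw [hlatbet t hit, ht]⟩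
  have hw1 : ((Finset.Icc (bet μ i - k) (bet μ i - 1)).filter (fun n => ¬ Bd n)).card
      = sp k L i := by
    rw [← hwin]
    congr 1
    apply Finset.filter_congr
    intro n hn
    rw [Finset.mem_Icc] at hn
    constructor
    · rintro hnb ⟨t, ht⟩
      exact hnb ⟨t, by
        have hit : i < t := by
          by_contra hc; push_neg at hc
          have := bet_anti μ hc
          omega
        exact hit, ht⟩
    · rintro hnb ⟨t, hit, ht⟩
      exact hnb ⟨t, ht⟩
  have hw2 : ((Finset.Icc (tbet k L i - k) (tbet k L i - 1)).filter (fun n => ¬ Bd n)).card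
      = sp k L i := by
    rw [← tbet_window k L hb hs i]
    congr 1
    apply Finset.filter_congr
    intro n hn
    rw [Finset.mem_Icc] at hn
    constructor
    · rintro hnb ⟨t, ht⟩
      have hit : i < t := by
        by_contra hc; push_neg at hc
        have := (tbet_strictAnti k L).antitone hc
        omega
      exact hnb ⟨t, hit, by rw [hlatbet t hit, ht]⟩
    · rintro hnb ⟨t, hit, ht⟩
      exact hnb ⟨t, by rw [← hlatbet t hit, ht]⟩
  have hbeq : bet μ i = tbet k L i :=
    key_inj k Bd (bet μ (i + 1)) hM _ _ hb1 hb2 hcb hcb' (by rw [hw1, hw2])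
  unfold bet tbet at hbeq
  omega

lemma main_rows (k : ℕ) (L : List ℕ) (hb : ∀ l ∈ L, 1 ≤ l ∧ l ≤ k)
    (hs : List.Pairwise (· ≥ ·) L) (μ : YoungDiagram) (hcore : μ.IsCore (k + 1))
    (hwin : ∀ i, ((Finset.Icc (bet μ i - k) (bet μ i - 1)).filter
        (fun n => ¬ ∃ t, bet μ t = n)).card = sp k L i) :
    ∀ i, μ.rowLen i = tgt k L i := by
  have key : ∀ d i, max (μ.colLen 0) (blen k L) ≤ i + d → μ.rowLen i = tgt k L i := by
    intro d
    induction d with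
    | zero =>
      intro i hi
      simp only [Nat.add_zero] at hi
      rw [rowLen_eq_zero_of_colLen (by omega), tgt_eq_zero k L i (by omega)]
    | succ d ih =>
      intro i hi
      rcases Nat.lt_or_ge (i + d) (max (μ.colLen 0) (blen k L)) with h | h
      · exact row_step k L hb hs μ i (fun t ht => ih t (by omega))
          (core_closure hcore i) (hwin i)
      · exact ih i h
  intro i
  exact key (max (μ.colLen 0) (blen k L)) i (by omega)

end Core5

/-- Let `R = R_{i_1} ∪ ⋯ ∪ R_{i_{m-1}}` and let `𝓡` be the `(k+1)`-core
with `𝔭(𝓡) = R`. Then `𝓡` has exactly one addable residue, this residue is congruent to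
`i_1 + ⋯ + i_{m-1}` modulo `k+1`, and the first row of `𝓡` has length `i_1 + ⋯ + i_{m-1}`. -/
theorem unique_addable_residue (k m : ℕ) (hk : 1 ≤ k) (hm : 2 ≤ m)
    (S : Multiset ℕ) (hScard : Multiset.card S = m - 1) (hS : ∀ i ∈ S, 1 ≤ i ∧ i ≤ k)
    (𝓡 : YoungDiagram) (hcore : 𝓡.IsCore (k + 1))
    (hp : ∀ i, pMap k 𝓡 i = (unionRects k S).rowLen i) :
    (∃! r : ZMod (k + 1), ∃ c : ℕ × ℕ, 𝓡.IsAddable c ∧ residue k c = r) ∧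
    (∀ c : ℕ × ℕ, 𝓡.IsAddable c → residue k c = ((S.sum : ℕ) : ZMod (k + 1))) ∧
    𝓡.rowLen 0 = S.sum := by
  classical
  have hLmem : ∀ l ∈ S.sort (· ≥ ·), 1 ≤ l ∧ l ≤ k :=
    fun l hl => hS l (Multiset.mem_sort _ |>.mp hl)
  have hLsort : List.Pairwise (· ≥ ·) (S.sort (· ≥ ·)) := S.pairwise_sort _
  have hLsum : (S.sort (· ≥ ·)).sum = S.sum := by
    have h1 : ((S.sort (· ≥ ·) : List ℕ) : Multiset ℕ) = S := Multiset.sort_eq S _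
    calc (S.sort (· ≥ ·)).sum = ((S.sort (· ≥ ·) : List ℕ) : Multiset ℕ).sum := by
          rw [Multiset.sum_coe]
      _ = S.sum := by rw [h1]
  have hwin : ∀ i, ((Finset.Icc (Core5.bet 𝓡 i - k) (Core5.bet 𝓡 i - 1)).filter
      (fun n => ¬ ∃ t, Core5.bet 𝓡 t = n)).card = Core5.sp k (S.sort (· ≥ ·)) i := by
    intro i
    rw [← Core5.pMap_eq_window k 𝓡 i, hp i, Core5.unionRects_rowLen k S hS i]
  have hrow : ∀ i, 𝓡.rowLen i = Core5.tgt k (S.sort (· ≥ ·)) i :=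
    Core5.main_rows k (S.sort (· ≥ ·)) hLmem hLsort 𝓡 hcore hwin
  have hbet : ∀ i, Core5.bet 𝓡 i = Core5.tbet k (S.sort (· ≥ ·)) i := by
    intro i; unfold Core5.bet Core5.tbet; rw [hrow i]
  have hrow0 : 𝓡.rowLen 0 = S.sum := by
    rw [hrow 0, Core5.tgt_zero_sum k _ (fun l hl => (hLmem l hl).2), hLsum]
  have concl2 : ∀ c : ℕ × ℕ, 𝓡.IsAddable c → residue k c = ((S.sum : ℕ) : ZMod (k + 1)) := by
    intro c hadd
    rw [Core5.isAddable_iff] at hadd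
    obtain ⟨hc2, hcor⟩ := hadd
    have hnb : ∀ t, Core5.tbet k (S.sort (· ≥ ·)) t ≠ Core5.tbet k (S.sort (· ≥ ·)) c.1 + 1 := by
      have hcn := (Core5.corner_iff_bet (μ := 𝓡) (i := c.1)).mp hcor
      intro t
      rw [← hbet t, ← hbet c.1]
      exact hcn t
    rcases Core5.tbet_residue k (S.sort (· ≥ ·)) hLmem hLsort c.1 with h | ⟨t, ht⟩
    · unfold residue
      have hcv : (c.2 : ℤ) - c.1 = Core5.tbet k (S.sort (· ≥ ·)) c.1 := by
        have hbc := hbet c.1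
        unfold Core5.bet at hbc
        rw [hc2]
        omega
      rw [hcv, h, hLsum]
    · exact absurd ht (hnb t)
  have hadd0 : 𝓡.IsAddable (0, 𝓡.rowLen 0) :=
    Core5.isAddable_iff.mpr ⟨rfl, Or.inl rfl⟩
  refine ⟨⟨((S.sum : ℕ) : ZMod (k + 1)),
      ⟨(0, 𝓡.rowLen 0), hadd0, concl2 _ hadd0⟩, ?_⟩, concl2, hrow0⟩
  rintro r ⟨c, hc, rfl⟩
  exact concl2 c hc
end

section
/- Fix an integer k ≥ 1. Let λ be a (k+1)-core and let r ∈ ℤ/(k+1)ℤ be a residue such that λ has at least one addable cell of residue r. Then the diagram obtained from λ by adding all addable cells of λ whose content is congruent to r modulo k+1 is the Young diagram of a partition, and this partition is again a (k+1)-core. -/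
open scoped RealInnerProductSpace

namespace AddCoreAux

def bet (μ : YoungDiagram) (i : ℕ) : ℤ := (μ.rowLen i : ℤ) - i

def colv (μ : YoungDiagram) (j : ℕ) : ℤ := (j : ℤ) + 1 - μ.colLen j

lemma mem_one_le (μ : YoungDiagram) {i j : ℕ} (h : (i, j) ∈ μ) :
    1 ≤ bet μ i - colv μ j := by
  have h1 : j < μ.rowLen i := YoungDiagram.mem_iff_lt_rowLen.mp h
  have h2 : i < μ.colLen j := YoungDiagram.mem_iff_lt_colLen.mp h
  unfold bet colv; omega

lemma not_mem_le (μ : YoungDiagram) {i j : ℕ} (h : (i, j) ∉ μ) :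
    bet μ i - colv μ j ≤ -1 := by
  have h1 : μ.rowLen i ≤ j := by
    by_contra hc; exact h (YoungDiagram.mem_iff_lt_rowLen.mpr (by omega))
  have h2 : μ.colLen j ≤ i := by
    by_contra hc; exact h (YoungDiagram.mem_iff_lt_colLen.mpr (by omega))
  unfold bet colv; omega

lemma bet_ne_colv (μ : YoungDiagram) (m j : ℕ) : bet μ m ≠ colv μ j := by
  by_cases h : (m, j) ∈ μ
  · have := mem_one_le μ h; omega
  · have := not_mem_le μ h; omega

lemma hook_cast (μ : YoungDiagram) {i j : ℕ} (h : (i, j) ∈ μ) :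
    (μ.hook (i, j) : ℤ) = bet μ i - colv μ j := by
  have h1 : j < μ.rowLen i := YoungDiagram.mem_iff_lt_rowLen.mp h
  have h2 : i < μ.colLen j := YoungDiagram.mem_iff_lt_colLen.mp h
  unfold YoungDiagram.hook bet colv; simp only; omega

lemma rowLen_eq_zero (μ : YoungDiagram) {m : ℕ} (h : μ.colLen 0 ≤ m) :
    μ.rowLen m = 0 := by
  by_contra hc
  have : (m, 0) ∈ μ := YoungDiagram.mem_iff_lt_rowLen.mpr (by omega)
  have := YoungDiagram.mem_iff_lt_colLen.mp this
  omega

lemma exists_between {f : ℕ → ℤ} {x : ℤ} :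
    ∀ N, f 0 ≤ x → x < f N → ∃ j, f j ≤ x ∧ x < f (j + 1) := by
  intro N
  induction N with
  | zero => intro h0 hN; omega
  | succ n ih =>
    intro h0 hN
    by_cases h : f n ≤ x
    · exact ⟨n, h, hN⟩
    · exact ih h0 (by omega)

/-- Every integer is a `bet` value or a `colv` value. -/
lemma cover (μ : YoungDiagram) (x : ℤ) :
    (∃ m, bet μ m = x) ∨ (∃ j, colv μ j = x) := by
  by_cases hx : x ≤ -(μ.colLen 0 : ℤ)
  · left
    refine ⟨(-x).toNat, ?_⟩
    have h0 : (μ.colLen 0 : ℤ) ≤ (-x).toNat := by omega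
    have := rowLen_eq_zero μ (m := (-x).toNat) (by exact_mod_cast h0)
    unfold bet; rw [this]; omega
  · push_neg at hx
    have h0 : colv μ 0 ≤ x := by unfold colv; omega
    set N : ℕ := (x + μ.colLen 0).toNat with hN
    have hNx : x < colv μ N := by
      have hcl : (μ.colLen N : ℤ) ≤ μ.colLen 0 := by
        exact_mod_cast μ.colLen_anti 0 N (Nat.zero_le _)
      unfold colv; omega
    obtain ⟨j, hj1, hj2⟩ := exists_between N h0 hNx
    by_cases he : colv μ j = x
    · exact Or.inr ⟨j, he⟩
    · left
      have hj1' : colv μ j < x := lt_of_le_of_ne hj1 he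
      refine ⟨((j : ℤ) + 1 - x).toNat, ?_⟩
      have hxle : x ≤ (j : ℤ) + 1 := by unfold colv at hj2; omega
      set m : ℕ := ((j : ℤ) + 1 - x).toNat with hm
      have hmz : (m : ℤ) = (j : ℤ) + 1 - x := by omega
      have hmem : (m, j) ∈ μ := by
        rw [YoungDiagram.mem_iff_lt_colLen]
        unfold colv at hj1'; omega
      have hnmem : (m, j + 1) ∉ μ := by
        rw [YoungDiagram.mem_iff_lt_colLen]
        unfold colv at hj2; push_cast at hj2 ⊢; omega
      have r1 : j < μ.rowLen m := YoungDiagram.mem_iff_lt_rowLen.mp hmem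
      have r2 : μ.rowLen m ≤ j + 1 := by
        by_contra hc
        exact hnmem (YoungDiagram.mem_iff_lt_rowLen.mpr (by omega))
      unfold bet; omega

/-- A diagram is a `t`-core iff its beta set is closed under subtracting `t`. -/
lemma core_iff (μ : YoungDiagram) (t : ℕ) (ht : 1 ≤ t) :
    μ.IsCore t ↔ ∀ i, ∃ m, bet μ m = bet μ i - t := by
  constructor
  · intro hcore i
    rcases cover μ (bet μ i - t) with h | ⟨j, hj⟩
    · exact h
    · exfalso
      have hmem : (i, j) ∈ μ := by
        by_contra hc
        have := not_mem_le μ hc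
        omega
      have := hook_cast μ hmem
      have hht : μ.hook (i, j) = t := by omega
      exact hcore (i, j) hmem hht
  · intro hcl
    rintro ⟨i, j⟩ hmem hht
    have hc := hook_cast μ hmem
    obtain ⟨m, hm⟩ := hcl i
    apply bet_ne_colv μ m j
    rw [hht] at hc
    omega

lemma bet_strictAnti (μ : YoungDiagram) : StrictAnti (bet μ) := by
  apply strictAnti_nat_of_succ_lt
  intro n
  have := μ.rowLen_anti n (n + 1) (by omega)
  unfold bet; omega

lemma rowLen_unique (ν : YoungDiagram) (a n : ℕ) (h : ∀ j, (a, j) ∈ ν ↔ j < n) :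
    ν.rowLen a = n := by
  have h2 : ∀ j, j < ν.rowLen a ↔ j < n :=
    fun j => (YoungDiagram.mem_iff_lt_rowLen (i := a) (j := j)).symm.trans (h j)
  rcases Nat.lt_trichotomy (ν.rowLen a) n with hh | hh | hh
  · exact absurd ((h2 (ν.rowLen a)).mpr hh) (lt_irrefl _)
  · exact hh
  · exact absurd ((h2 n).mp hh) (lt_irrefl _)

/-- cells dominated by an addable corner are in the diagram -/
lemma to_lam (lam : YoungDiagram) {i : ℕ}
    (hP : ∀ m, bet lam m ≠ bet lam i + 1) {a b2 : ℕ}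
    (ha : a ≤ i) (hb : b2 ≤ lam.rowLen i)
    (hne : ¬(a = i ∧ b2 = lam.rowLen i)) : (a, b2) ∈ lam := by
  rw [YoungDiagram.mem_iff_lt_rowLen]
  by_cases hb2 : b2 < lam.rowLen i
  · exact lt_of_lt_of_le hb2 (lam.rowLen_anti a i ha)
  · have hb2' : b2 = lam.rowLen i := by omega
    have hai : a < i := by
      rcases Nat.lt_or_ge a i with h | h
      · exact h
      · exact absurd ⟨by omega, hb2'⟩ hne
    have hi1 : 1 ≤ i := by omega
    have h1 : bet lam i < bet lam (i - 1) := bet_strictAnti lam (by omega)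
    have h2 : bet lam (i - 1) ≠ bet lam i + 1 := hP (i - 1)
    have h3 : bet lam i + 2 ≤ bet lam (i - 1) := by omega
    have h4 : lam.rowLen i + 1 ≤ lam.rowLen (i - 1) := by unfold bet at h3; omega
    have h5 := lam.rowLen_anti a (i - 1) (by omega)
    omega

lemma addable_iff (lam : YoungDiagram) (i j : ℕ) :
    lam.IsAddable (i, j) ↔ j = lam.rowLen i ∧ ∀ m, bet lam m ≠ bet lam i + 1 := by
  constructor
  · rintro ⟨hnm, ν0, hν0⟩
    have hji : lam.rowLen i ≤ j := by
      by_contra hc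
      exact hnm (YoungDiagram.mem_iff_lt_rowLen.mpr (by omega))
    have hmemν : (i, j) ∈ ν0 := by
      rw [← YoungDiagram.mem_cells, hν0]; exact Finset.mem_insert_self _ _
    have hje : j = lam.rowLen i := by
      by_contra hc
      have hj1 : 1 ≤ j := by omega
      have hstep : (i, j - 1) ∈ ν0 :=
        ν0.isLowerSet (b := (i, j - 1)) (a := (i, j)) ⟨le_refl i, by omega⟩ hmemν
      rw [← YoungDiagram.mem_cells, hν0, Finset.mem_insert] at hstep
      rcases hstep with h | h
      · simp only [Prod.mk.injEq] at h; omega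
      · have := YoungDiagram.mem_iff_lt_rowLen.mp ((YoungDiagram.mem_cells _).mp h)
        omega
    refine ⟨hje, ?_⟩
    intro m hm
    have hmi : m < i := (bet_strictAnti lam).lt_iff_gt.mp (by omega)
    have him : i = m + 1 := by
      by_contra hc
      have h1 : bet lam i < bet lam (m + 1) := bet_strictAnti lam (by omega)
      have h2 : bet lam (m + 1) < bet lam m := bet_strictAnti lam (by omega)
      omega
    have hrow : lam.rowLen m = lam.rowLen i := by unfold bet at hm; omega
    have hstep : (m, j) ∈ ν0 :=
      ν0.isLowerSet (b := (m, j)) (a := (i, j)) ⟨by omega, le_refl j⟩ hmemν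
    rw [← YoungDiagram.mem_cells, hν0, Finset.mem_insert] at hstep
    rcases hstep with h | h
    · simp only [Prod.mk.injEq] at h; omega
    · have := YoungDiagram.mem_iff_lt_rowLen.mp ((YoungDiagram.mem_cells _).mp h)
      omega
  · rintro ⟨hj, hP2⟩
    refine ⟨by rw [YoungDiagram.mem_iff_lt_rowLen]; omega, ?_⟩
    refine ⟨⟨insert (i, j) lam.cells, ?_⟩, rfl⟩
    rw [Finset.coe_insert]
    rintro ⟨x1, x2⟩ ⟨y1, y2⟩ hyx hx
    rw [Prod.mk_le_mk] at hyx
    rcases Set.mem_insert_iff.mp hx with hx | hx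
    · rw [Prod.mk.injEq] at hx
      by_cases he : y1 = i ∧ y2 = j
      · exact Set.mem_insert_iff.mpr (Or.inl (by rw [Prod.mk.injEq]; exact he))
      · refine Set.mem_insert_iff.mpr (Or.inr ?_)
        have := to_lam lam hP2 (a := y1) (b2 := y2)
          (by omega) (by omega) (by rw [← hj]; omega)
        exact this
    · exact Set.mem_insert_iff.mpr (Or.inr (lam.isLowerSet hyx hx))

end AddCoreAux


/-- If a `(k+1)`-core `λ` has an addable cell of residue `r`, then adding
all addable cells of residue `r` yields the Young diagram of a partition, which is again
a `(k+1)`-core. -/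
theorem add_all_addable_cells_of_residue (k : ℕ) (hk : 1 ≤ k)
    (lam : YoungDiagram) (hcore : lam.IsCore (k + 1)) (r : ZMod (k + 1))
    (hex : ∃ c : ℕ × ℕ, lam.IsAddable c ∧ residue k c = r) :
    ∃ ν : YoungDiagram,
      (ν.cells : Set (ℕ × ℕ)) = ↑lam.cells ∪ {c | lam.IsAddable c ∧ residue k c = r} ∧
      ν.IsCore (k + 1) := by
  classical
  have hB := (AddCoreAux.core_iff lam (k + 1) (by omega)).mp hcore
  set b := AddCoreAux.bet lam with hbdef
  set P : ℕ → Prop :=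
    fun i => ((b i : ZMod (k + 1)) = r ∧ ∀ m, b m ≠ b i + 1) with hPdef
  have h10 : (1 : ZMod (k + 1)) ≠ 0 := by
    haveI : Fact (1 < k + 1) := ⟨by omega⟩
    exact one_ne_zero
  have hcast : ∀ x : ℤ, ((x - ((k : ℤ) + 1) : ℤ) : ZMod (k + 1)) = (x : ZMod (k + 1)) := by
    intro x
    have h0 : ((k + 1 : ℕ) : ZMod (k + 1)) = 0 := ZMod.natCast_self _
    push_cast at h0 ⊢
    rw [h0]; ring
  have hPle : ∀ i, P i → i < lam.colLen 0 + 1 := by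
    intro i hPi
    by_contra hc
    push_neg at hc
    have h1 : lam.rowLen i = 0 := AddCoreAux.rowLen_eq_zero lam (by omega)
    have h2 : lam.rowLen (i - 1) = 0 := AddCoreAux.rowLen_eq_zero lam (by omega)
    refine hPi.2 (i - 1) ?_
    rw [hbdef]
    unfold AddCoreAux.bet
    rw [h1, h2]
    push_cast
    omega
  set A : Finset (ℕ × ℕ) :=
    ((Finset.range (lam.colLen 0 + 1)).filter fun i => P i).image
      (fun i => (i, lam.rowLen i)) with hAdef
  have hA : ∀ a j : ℕ, ((a, j) ∈ A ↔ (j = lam.rowLen a ∧ P a)) := by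
    intro a j
    rw [hAdef]
    simp only [Finset.mem_image, Finset.mem_filter, Finset.mem_range]
    constructor
    · rintro ⟨i, ⟨hi1, hi2⟩, hi3⟩
      rw [Prod.mk.injEq] at hi3
      obtain ⟨h1, h2⟩ := hi3
      subst h1; exact ⟨h2.symm, hi2⟩
    · rintro ⟨hj, hPa⟩
      exact ⟨a, ⟨hPle a hPa, hPa⟩, by rw [hj]⟩
  have hlow : IsLowerSet ((lam.cells ∪ A : Finset (ℕ × ℕ)) : Set (ℕ × ℕ)) := by
    rw [Finset.coe_union]
    rintro ⟨x1, x2⟩ ⟨y1, y2⟩ hyx hx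
    rw [Prod.mk_le_mk] at hyx
    rcases hx with hx | hx
    · exact Or.inl (lam.isLowerSet (by rw [Prod.mk_le_mk]; exact hyx) hx)
    · have hx' := (hA x1 x2).mp (Finset.mem_coe.mp hx)
      by_cases he : y1 = x1 ∧ y2 = x2
      · right; rw [he.1, he.2]; exact hx
      · left
        have := AddCoreAux.to_lam lam hx'.2.2 (a := y1) (b2 := y2)
          hyx.1 (by omega) (by rw [← hx'.1]; omega)
        exact this
  set ν : YoungDiagram := ⟨lam.cells ∪ A, hlow⟩ with hνdef
  have hmemν : ∀ a j : ℕ, ((a, j) ∈ ν ↔ ((a, j) ∈ lam ∨ (j = lam.rowLen a ∧ P a))) := by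
    intro a j
    have h1 : (a, j) ∈ ν ↔ (a, j) ∈ lam.cells ∪ A := Iff.rfl
    rw [h1, Finset.mem_union, YoungDiagram.mem_cells, hA]
  have hrow1 : ∀ a, P a → ν.rowLen a = lam.rowLen a + 1 := by
    intro a hPa
    apply AddCoreAux.rowLen_unique
    intro j
    rw [hmemν a j, YoungDiagram.mem_iff_lt_rowLen]
    constructor
    · rintro (h | ⟨h, _⟩) <;> omega
    · intro h
      rcases Nat.lt_or_ge j (lam.rowLen a) with h2 | h2
      · exact Or.inl h2
      · exact Or.inr ⟨by omega, hPa⟩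
  have hrow2 : ∀ a, ¬ P a → ν.rowLen a = lam.rowLen a := by
    intro a hPa
    apply AddCoreAux.rowLen_unique
    intro j
    rw [hmemν a j, YoungDiagram.mem_iff_lt_rowLen]
    constructor
    · rintro (h | ⟨h, hp⟩)
      · exact h
      · exact absurd hp hPa
    · exact Or.inl
  have hbet1 : ∀ a, P a → AddCoreAux.bet ν a = b a + 1 := by
    intro a hPa
    have hb : b a = (lam.rowLen a : ℤ) - a := rfl
    show (ν.rowLen a : ℤ) - a = _
    rw [hrow1 a hPa, hb]
    push_cast; ring
  have hbet2 : ∀ a, ¬ P a → AddCoreAux.bet ν a = b a := by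
    intro a hPa
    have hb : b a = (lam.rowLen a : ℤ) - a := rfl
    show (ν.rowLen a : ℤ) - a = _
    rw [hrow2 a hPa, hb]
  have hresb : ∀ a : ℕ, residue k (a, lam.rowLen a) = ((b a : ℤ) : ZMod (k + 1)) :=
    fun a => rfl
  refine ⟨ν, ?_, ?_⟩
  · ext ⟨a, j⟩
    simp only [Finset.mem_coe, Set.mem_union, Set.mem_setOf_eq]
    have h1 : ((a, j) ∈ ν.cells) ↔ ((a, j) ∈ ν) := YoungDiagram.mem_cells _
    rw [h1, hmemν a j, YoungDiagram.mem_cells]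
    have key : (j = lam.rowLen a ∧ P a) ↔ (lam.IsAddable (a, j) ∧ residue k (a, j) = r) := by
      rw [AddCoreAux.addable_iff]
      constructor
      · rintro ⟨hj, hr, hm⟩
        subst hj
        exact ⟨⟨rfl, hm⟩, by rw [hresb a]; exact hr⟩
      · rintro ⟨⟨hj, hm⟩, hres⟩
        subst hj
        refine ⟨rfl, ?_, hm⟩
        rw [hresb a] at hres
        exact hres
    rw [key]
  · rw [AddCoreAux.core_iff ν (k + 1) (by omega)]
    intro a
    obtain ⟨m, hm⟩ := hB a
    by_cases hPa : P a
    · have hmr : (b m : ZMod (k + 1)) = r := by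
        rw [show b m = b a - ((k : ℤ) + 1) by push_cast at hm ⊢; omega, hcast]
        exact hPa.1
      by_cases hm1 : ∀ p, b p ≠ b m + 1
      · refine ⟨m, ?_⟩
        rw [hbet1 m ⟨hmr, hm1⟩, hbet1 a hPa]
        push_cast at hm ⊢; omega
      · push_neg at hm1
        obtain ⟨n, hn⟩ := hm1
        have hPn : ¬ P n := by
          intro hPn
          apply h10
          have e1 := hPn.1
          rw [hn] at e1
          push_cast at e1
          rw [hmr] at e1
          have e2 : r + 1 = r + 0 := by rw [add_zero]; exact e1
          exact add_left_cancel e2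
        refine ⟨n, ?_⟩
        rw [hbet2 n hPn, hbet1 a hPa, hn]
        push_cast at hm ⊢; omega
    · by_cases hPm : P m
      · exfalso
        have har : (b a : ZMod (k + 1)) = r := by
          have e := hPm.1
          rw [show b m = b a - ((k : ℤ) + 1) by push_cast at hm ⊢; omega, hcast] at e
          exact e
        have hna : ¬ ∀ p, b p ≠ b a + 1 := fun h => hPa ⟨har, h⟩
        push_neg at hna
        obtain ⟨n, hn⟩ := hna
        obtain ⟨p, hp⟩ := hB n
        exact hPm.2 p (by push_cast at hp hm ⊢; omega)
      · refine ⟨m, ?_⟩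
        rw [hbet2 m hPm, hbet2 a hPa]
        push_cast at hm ⊢; omega
end
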